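/- Let S ⊆ T be two markings on a category C, let F, G : C ⥤ Type u be T-adapted S-cosheaves, let α : F ⟶ G be a natural transformation, and let D ⊆ C be a generating full subcategory. If for every morphism t : D′ ⟶ D of T with D′ and D in D the naturality square of α at t is a pullback square, then α is T-cartesian, i.e. the naturality square of α at every morphism of T in C is a pullback square. -/

import Mathlib

open CategoryTheory Limits

universe w v u

variable {C : Type u} [Category.{v} C]

/-- A *marking* on a category `C`: a class of morphisms containing all isomorphisms,
stable under composition, such that pullbacks along its members exist and it is
stable under such pullbacks. -/
structure Marking (S : MorphismProperty C) : Prop where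
  of_isIso : ∀ {X Y : C} (f : X ⟶ Y), IsIso f → S f
  comp_mem : ∀ {X Y Z : C} {f : X ⟶ Y} {g : Y ⟶ Z}, S f → S g → S (f ≫ g)
  hasPullback : ∀ {X Y Z : C} (s : X ⟶ Z) (g : Y ⟶ Z), S s → HasPullback s g
  snd_mem : ∀ {X Y Z : C} (s : X ⟶ Z) (g : Y ⟶ Z) (hs : S s),
    letI := hasPullback s g hs
    S (pullback.snd s g)

/-- The iterated fibre powers of a morphism `s : C₀ ⟶ X` of a marking,
together with their projections to `X`, which again belong to the marking:
`fibrePowerAux n` is the `(n+1)`-fold fibre power `C₀ ×_X ⋯ ×_X C₀`. -/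
noncomputable def Marking.fibrePowerAux {S : MorphismProperty C} (hS : Marking S)
    {C₀ X : C} (s : C₀ ⟶ X) (hs : S s) : (n : ℕ) → Σ' (Z : C) (p : Z ⟶ X), S p
  | 0 => ⟨C₀, s, hs⟩
  | n + 1 =>
    let prev := hS.fibrePowerAux s hs n
    letI := hS.hasPullback prev.2.1 s prev.2.2
    ⟨pullback prev.2.1 s, pullback.snd prev.2.1 s ≫ s,
      hS.comp_mem (hS.snd_mem prev.2.1 s prev.2.2) hs⟩

/-- The `(n+1)`-fold fibre power `C₀ ×_X ⋯ ×_X C₀` of a morphism `s : C₀ ⟶ X`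
belonging to a marking. -/
noncomputable def Marking.fibrePower {S : MorphismProperty C} (hS : Marking S)
    {C₀ X : C} (s : C₀ ⟶ X) (hs : S s) (n : ℕ) : C :=
  (hS.fibrePowerAux s hs n).1

/-- The projection from the `(n+1)`-fold fibre power of `s : C₀ ⟶ X` to the base `X`. -/
noncomputable def Marking.fibrePowerHom {S : MorphismProperty C} (hS : Marking S)
    {C₀ X : C} (s : C₀ ⟶ X) (hs : S s) (n : ℕ) : hS.fibrePower s hs n ⟶ X :=
  (hS.fibrePowerAux s hs n).2.1

/-- A full subcategory (given by a predicate `P` on objects) is *downward closed*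
with respect to a marking `S` if whenever `s : C₀ ⟶ X` belongs to `S` and all the
iterated fibre powers `C₀ ×_X ⋯ ×_X C₀` satisfy `P`, then so does `X`. -/
def DownwardClosed {S : MorphismProperty C} (hS : Marking S) (P : C → Prop) : Prop :=
  ∀ {C₀ X : C} (s : C₀ ⟶ X) (hs : S s), (∀ n : ℕ, P (hS.fibrePower s hs n)) → P X

/-- A full subcategory (given by a predicate `P` on objects) is *generating* with
respect to a marking `S` if it is closed under pullbacks along morphisms of `S` and
the only downward closed full subcategory containing it is the whole category. -/
structure IsGenerating {S : MorphismProperty C} (hS : Marking S) (P : C → Prop) : Prop where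
  pullback_mem : ∀ {A B X : C} (s : A ⟶ X) (g : B ⟶ X) (hs : S s),
    P A → P B → P X →
    letI := hS.hasPullback s g hs
    P (pullback s g)
  generates : ∀ Q : C → Prop, DownwardClosed hS Q → (∀ X, P X → Q X) → ∀ X, Q X

/-- The canonical comparison map `F(D ×_X E) ⟶ F(D) ×_{F(X)} F(E)` for a
`Type`-valued functor `F`. -/
noncomputable def comparisonMap (F : C ⥤ Type w) {D E X : C} (t : D ⟶ X) (g : E ⟶ X)
    [hpb : HasPullback t g] (z : F.obj (pullback t g)) :
    { p : F.obj D × F.obj E // F.map t p.1 = F.map g p.2 } :=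
  ⟨(F.map (pullback.fst t g) z, F.map (pullback.snd t g) z), by
    rw [← FunctorToTypes.map_comp_apply, ← FunctorToTypes.map_comp_apply,
      pullback.condition]⟩

/-- A functor `F : C ⥤ Type` is an `S`-cosheaf if for every `s : C₀ ⟶ X` in `S`
the diagram `F(C₀ ×_X C₀) ⇉ F(C₀) ⟶ F(X)` is a coequalizer. -/
def IsCosheaf {S : MorphismProperty C} (hS : Marking S) (F : C ⥤ Type w) : Prop :=
  ∀ {C₀ X : C} (s : C₀ ⟶ X) (hs : S s),
    letI := hS.hasPullback s s hs
    Nonempty (IsColimit (Cofork.ofπ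
      (f := F.map (pullback.fst s s)) (g := F.map (pullback.snd s s)) (F.map s)
      (by rw [← F.map_comp, ← F.map_comp, pullback.condition])))

/-- A functor `F : C ⥤ Type` is `T`-adapted if it commutes with pullbacks along
morphisms of `T`. -/
def IsAdapted {T : MorphismProperty C} (hT : Marking T) (F : C ⥤ Type w) : Prop :=
  ∀ {D E X : C} (t : D ⟶ X) (ht : T t) (g : E ⟶ X),
    Function.Bijective (comparisonMap F t g (hpb := hT.hasPullback t g ht))

/-- The naturality square of `α : F ⟶ G` at `t : D ⟶ X` is a pullback square of types. -/
def SquareCartesian {F G : C ⥤ Type w} (α : F ⟶ G) {D X : C} (t : D ⟶ X) : Prop :=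
  Function.Bijective (fun z : F.obj D =>
    (⟨(F.map t z, α.app D z), (FunctorToTypes.naturality α t z)⟩ :
      { p : F.obj X × G.obj D // α.app X p.1 = G.map t p.2 }))

/-- A natural transformation `α : F ⟶ G` is `T`-cartesian if all its naturality
squares at morphisms of `T` are pullback squares. -/
def IsCartesianNatTrans (T : MorphismProperty C) {F G : C ⥤ Type w} (α : F ⟶ G) : Prop :=
  ∀ {D X : C} (t : D ⟶ X), T t → SquareCartesian α t

section Aux

variable {S T : MorphismProperty C}

lemma Marking.fst_mem' (hT : Marking T) {X Y Z : C} (s : X ⟶ Z) (g : Y ⟶ Z) (hg : T g)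
    [HasPullback s g] : T (pullback.fst s g) := by
  haveI := hT.hasPullback g s hg
  rw [← pullbackSymmetry_hom_comp_snd s g]
  exact hT.comp_mem (hT.of_isIso _ inferInstance) (hT.snd_mem g s hg)

lemma cosheaf_surjective (hS : Marking S) {F : C ⥤ Type w} (hFc : IsCosheaf hS F)
    {C₀ X : C} (s : C₀ ⟶ X) (hs : S s) : Function.Surjective (F.map s) := by
  haveI := hS.hasPullback s s hs
  obtain ⟨hc⟩ := hFc s hs
  rw [← epi_iff_surjective]
  constructor
  intro Z u v huv
  exact Cofork.IsColimit.hom_ext hc (by simpa using huv)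

lemma adapted_exists (hT : Marking T) {F : C ⥤ Type w}
    (hFa : IsAdapted hT F) {D E X : C} (t : D ⟶ X) (ht : T t) (g : E ⟶ X)
    (a : F.obj D) (b : F.obj E) (hab : F.map t a = F.map g b) :
    letI := hT.hasPullback t g ht
    ∃ z, F.map (pullback.fst t g) z = a ∧ F.map (pullback.snd t g) z = b := by
  obtain ⟨z, hz⟩ := (hFa t ht g).2 ⟨(a, b), hab⟩
  exact ⟨z, congrArg (fun p => p.1.1) hz, congrArg (fun p => p.1.2) hz⟩

lemma adapted_injective (hT : Marking T) {F : C ⥤ Type w}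
    (hFa : IsAdapted hT F) {D E X : C} (t : D ⟶ X) (ht : T t) (g : E ⟶ X)
    (z₁ z₂ : letI := hT.hasPullback t g ht; F.obj (pullback t g))
    (h1 : letI := hT.hasPullback t g ht;
      F.map (pullback.fst t g) z₁ = F.map (pullback.fst t g) z₂)
    (h2 : letI := hT.hasPullback t g ht;
      F.map (pullback.snd t g) z₁ = F.map (pullback.snd t g) z₂) : z₁ = z₂ :=
  (hFa t ht g).1 (Subtype.ext (Prod.ext h1 h2))

lemma squareCartesian_of {F G : C ⥤ Type w} (α : F ⟶ G) {D X : C} (t : D ⟶ X)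
    (hinj : ∀ z₁ z₂ : F.obj D, F.map t z₁ = F.map t z₂ → α.app D z₁ = α.app D z₂ → z₁ = z₂)
    (hsurj : ∀ (x : F.obj X) (g : G.obj D), α.app X x = G.map t g →
      ∃ z, F.map t z = x ∧ α.app D z = g) : SquareCartesian α t := by
  constructor
  · intro z₁ z₂ hz
    exact hinj z₁ z₂ (congrArg (fun p => p.1.1) hz) (congrArg (fun p => p.1.2) hz)
  · rintro ⟨⟨x, g⟩, hxg⟩
    obtain ⟨z, h1, h2⟩ := hsurj x g hxg
    exact ⟨z, Subtype.ext (Prod.ext h1 h2)⟩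

lemma SquareCartesian.inj' {F G : C ⥤ Type w} {α : F ⟶ G} {D X : C} {t : D ⟶ X}
    (hc : SquareCartesian α t) {z₁ z₂ : F.obj D}
    (h1 : F.map t z₁ = F.map t z₂) (h2 : α.app D z₁ = α.app D z₂) : z₁ = z₂ :=
  hc.1 (Subtype.ext (Prod.ext h1 h2))

lemma SquareCartesian.surj' {F G : C ⥤ Type w} {α : F ⟶ G} {D X : C} {t : D ⟶ X}
    (hc : SquareCartesian α t) (x : F.obj X) (g : G.obj D) (hxg : α.app X x = G.map t g) :
    ∃ z, F.map t z = x ∧ α.app D z = g := by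
  obtain ⟨z, hz⟩ := hc.2 ⟨(x, g), hxg⟩
  exact ⟨z, congrArg (fun p => p.1.1) hz, congrArg (fun p => p.1.2) hz⟩

end Aux

/-- Let `S ⊆ T` be markings, `F, G` two `T`-adapted `S`-cosheaves,
`α : F ⟶ G` a natural transformation and `P` a generating full subcategory. If the
naturality square of `α` at every morphism of `T` between objects of `P` is a
pullback square, then `α` is `T`-cartesian. -/
theorem isCartesian_of_isCartesian_on_generating
    {C : Type u} [Category.{v} C] {S T : MorphismProperty C}
    (hS : Marking S) (hT : Marking T) (hST : ∀ {X Y : C} (f : X ⟶ Y), S f → T f)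
    {F G : C ⥤ Type w}
    (hFc : IsCosheaf hS F) (hFa : IsAdapted hT F)
    (hGc : IsCosheaf hS G) (hGa : IsAdapted hT G)
    (α : F ⟶ G) (P : C → Prop) (hgen : IsGenerating hS P)
    (h : ∀ {D' D : C} (t : D' ⟶ D), T t → P D' → P D → SquareCartesian α t) :
    IsCartesianNatTrans T α := by
  have hsF : ∀ {C₀ X : C} (s : C₀ ⟶ X), S s → Function.Surjective (F.map s) :=
    fun s hs => cosheaf_surjective hS hFc s hs
  have hsG : ∀ {C₀ X : C} (s : C₀ ⟶ X), S s → Function.Surjective (G.map s) :=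
    fun s hs => cosheaf_surjective hS hGc s hs
  -- Step 1: descent on the source.
  have q0 : ∀ D' : C, ∀ (D : C) (t : D' ⟶ D), T t → P D → SquareCartesian α t := by
    refine hgen.generates _ ?_ (fun D' hD' D t ht hD => h t ht hD' hD)
    intro C₀ X s hs hn D t ht hD
    haveI := hS.hasPullback s s hs
    have h0 : ∀ (D : C) (t : C₀ ⟶ D), T t → P D → SquareCartesian α t := hn 0
    have h1 : ∀ (D : C) (t : pullback s s ⟶ D), T t → P D → SquareCartesian α t := hn 1
    have hst : SquareCartesian α (s ≫ t) :=
      h0 D (s ≫ t) (hT.comp_mem (hST s hs) ht) hD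
    refine squareCartesian_of α t ?_ ?_
    · intro z₁ z₂ hz hα
      obtain ⟨c₁, hc₁⟩ := hsF s hs z₁
      obtain ⟨c₂, hc₂⟩ := hsF s hs z₂
      have hG : G.map s (α.app C₀ c₁) = G.map s (α.app C₀ c₂) := by
        rw [← FunctorToTypes.naturality, ← FunctorToTypes.naturality, hc₁, hc₂, hα]
      obtain ⟨wG, hwG1, hwG2⟩ :=
        adapted_exists hT hGa s (hST s hs) s (α.app C₀ c₁) (α.app C₀ c₂) hG
      have hr : SquareCartesian α (pullback.fst s s ≫ (s ≫ t)) :=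
        h1 D _ (hT.comp_mem (hST _ (hS.fst_mem' s s hs)) (hT.comp_mem (hST s hs) ht)) hD
      have hd : α.app D (F.map t z₁) = G.map (pullback.fst s s ≫ (s ≫ t)) wG := by
        rw [FunctorToTypes.map_comp_apply, hwG1, FunctorToTypes.map_comp_apply,
          ← FunctorToTypes.naturality, ← FunctorToTypes.naturality, hc₁]
      obtain ⟨w, hw1, hw2⟩ := hr.surj' (F.map t z₁) wG hd
      have hac₁ : F.map (pullback.fst s s) w = c₁ := by
        refine hst.inj' ?_ ?_
        · rw [← FunctorToTypes.map_comp_apply, hw1, FunctorToTypes.map_comp_apply, hc₁]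
        · rw [FunctorToTypes.naturality, hw2, hwG1]
      have hbc₂ : F.map (pullback.snd s s) w = c₂ := by
        refine hst.inj' ?_ ?_
        · rw [← FunctorToTypes.map_comp_apply, ← Category.assoc, ← pullback.condition,
            Category.assoc, hw1, FunctorToTypes.map_comp_apply, hc₂, hz]
        · rw [FunctorToTypes.naturality, hw2, hwG2]
      rw [← hc₁, ← hc₂, ← hac₁, ← hbc₂, ← FunctorToTypes.map_comp_apply,
        ← FunctorToTypes.map_comp_apply, pullback.condition]
    · intro d g hdg
      obtain ⟨g₀, hg₀⟩ := hsG s hs g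
      obtain ⟨c, hc1, hc2⟩ := hst.surj' d g₀ (by
        rw [hdg, ← hg₀, ← FunctorToTypes.map_comp_apply])
      refine ⟨F.map s c, ?_, ?_⟩
      · rw [← FunctorToTypes.map_comp_apply, hc1]
      · rw [FunctorToTypes.naturality, hc2, hg₀]
  -- Step 2: descent on the target.
  have q1 : ∀ X : C, ∀ (D : C) (t : D ⟶ X), T t → SquareCartesian α t := by
    refine hgen.generates _ ?_ (fun X hX D t ht => q0 D X t ht hX)
    intro C₀ X s hs hn D t ht
    haveI := hS.hasPullback s t hs
    have h0 : ∀ (D : C) (t : D ⟶ C₀), T t → SquareCartesian α t := hn 0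
    have hq : SquareCartesian α (pullback.fst s t) :=
      h0 _ (pullback.fst s t) (hT.fst_mem' s t ht)
    refine squareCartesian_of α t ?_ ?_
    · intro z₁ z₂ hz hα
      obtain ⟨c, hc⟩ := hsF s hs (F.map t z₁)
      obtain ⟨w₁, hw₁1, hw₁2⟩ := adapted_exists hT hFa s (hST s hs) t c z₁ hc
      obtain ⟨w₂, hw₂1, hw₂2⟩ := adapted_exists hT hFa s (hST s hs) t c z₂ (by rw [hc, hz])
      have hαw : α.app _ w₁ = α.app _ w₂ := by
        refine adapted_injective hT hGa s (hST s hs) t _ _ ?_ ?_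
        · rw [← FunctorToTypes.naturality, ← FunctorToTypes.naturality, hw₁1, hw₂1]
        · rw [← FunctorToTypes.naturality, ← FunctorToTypes.naturality, hw₁2, hw₂2, hα]
      have hw : w₁ = w₂ := hq.inj' (by rw [hw₁1, hw₂1]) hαw
      rw [← hw₁2, ← hw₂2, hw]
    · intro x g hxg
      obtain ⟨c, hc⟩ := hsF s hs x
      obtain ⟨wG, hwG1, hwG2⟩ := adapted_exists hT hGa s (hST s hs) t (α.app C₀ c) g (by
        rw [← FunctorToTypes.naturality, hc, hxg])
      obtain ⟨w, hw1, hw2⟩ := hq.surj' c wG (by rw [← hwG1])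
      refine ⟨F.map (pullback.snd s t) w, ?_, ?_⟩
      · rw [← FunctorToTypes.map_comp_apply, ← pullback.condition,
          FunctorToTypes.map_comp_apply, hw1, hc]
      · rw [FunctorToTypes.naturality, hw2, hwG2]
  exact fun {D X} t ht => q1 X D t ht
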